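/- There is a constant C = C(Δ) such that for every small enough h > 0, the infimum over y ∈ W^{2,2}(B₁; ℝ³) of I_{h,Δ}(y) = ∫_{B₁}(|DyᵀDy − g_Δ|² + h²|D²y|²) dx is at most 2πΔ²h²(|log h| + C). -/

import Mathlib

open MeasureTheory Metric

noncomputable section

abbrev E2 : Type := EuclideanSpace ℝ (Fin 2)
abbrev E3 : Type := EuclideanSpace ℝ (Fin 3)

def e2 (i : Fin 2) : E2 := EuclideanSpace.single i (1 : ℝ)

/-- The components of `x̂⊥ = (−x₂, x₁)/|x|`. -/
noncomputable def perpHat (x : E2) (i : Fin 2) : ℝ :=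
  (if i = 0 then -(x 1) else x 0) / ‖x‖

/-- Entry `(i,j)` of the singular cone metric `g_Δ = Id − Δ² x̂⊥ ⊗ x̂⊥`. -/
noncomputable def gDelta (Δ : ℝ) (x : E2) (i j : Fin 2) : ℝ :=
  (if i = j then (1 : ℝ) else 0) - Δ ^ 2 * perpHat x i * perpHat x j

/-- Membrane energy density `|DyᵀDy − g_Δ|²` (squared Frobenius norm). -/
noncomputable def memb (Δ : ℝ) (y : E2 → E3) (x : E2) : ℝ :=
  ∑ i, ∑ j, ((inner ℝ (fderiv ℝ y x (e2 i)) (fderiv ℝ y x (e2 j)) : ℝ) - gDelta Δ x i j) ^ 2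

/-- Bending energy density `|D²y|²` (squared Frobenius norm of all second
partial derivatives of all three components). -/
noncomputable def bend (y : E2 → E3) (x : E2) : ℝ :=
  ∑ i, ∑ j, ‖fderiv ℝ (fun z => fderiv ℝ y z (e2 i)) x (e2 j)‖ ^ 2

/-- The geometrically nonlinear free elastic energy
`I_{h,Δ}(y) = ∫_{B₁} (|DyᵀDy − g_Δ|² + h²|D²y|²) dx`. -/
noncomputable def Ienergy (h Δ : ℝ) (y : E2 → E3) : ℝ :=
  ∫ x in ball (0 : E2) 1, (memb Δ y x + h ^ 2 * bend y x)



namespace Stmt7Aux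

variable (Δ h : ℝ)

def u3 (k : Fin 3) : E3 := EuclideanSpace.single k (1 : ℝ)

def q (x : E2) : ℝ := x 0 ^ 2 + x 1 ^ 2 + h ^ 2

def sf (x : E2) : ℝ := Real.sqrt (q h x)

def ym (x : E2) : E3 :=
  (Real.sqrt (1 - Δ ^ 2) * x 0) • u3 0 + (Real.sqrt (1 - Δ ^ 2) * x 1) • u3 1
    + (Δ * sf h x) • u3 2

def P (i : Fin 2) : E2 →L[ℝ] ℝ := EuclideanSpace.proj i

def Ds (x : E2) : E2 →L[ℝ] ℝ := (x 0 / sf h x) • P 0 + (x 1 / sf h x) • P 1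

def Dy (x : E2) : E2 →L[ℝ] E3 :=
  ((Real.sqrt (1 - Δ ^ 2)) • P 0).smulRight (u3 0)
    + ((Real.sqrt (1 - Δ ^ 2)) • P 1).smulRight (u3 1)
    + (Δ • Ds h x).smulRight (u3 2)

def Dg (i : Fin 2) (x : E2) : E2 →L[ℝ] ℝ :=
  Δ • ((sf h x)⁻¹ • P i + (-(x i / sf h x ^ 2)) • Ds h x)

variable {h}

lemma q_pos (hh : h ≠ 0) (x : E2) : 0 < q h x := by
  have h2 : 0 < h ^ 2 := by positivity
  have := sq_nonneg (x 0); have := sq_nonneg (x 1)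
  unfold q; nlinarith

lemma sf_pos (hh : h ≠ 0) (x : E2) : 0 < sf h x := Real.sqrt_pos.2 (q_pos hh x)

lemma sf_sq (hh : h ≠ 0) (x : E2) : sf h x ^ 2 = q h x := Real.sq_sqrt (q_pos hh x).le

lemma proj_hasFDerivAt (i : Fin 2) (x : E2) :
    HasFDerivAt (fun z : E2 => z i) (P i) x := by
  exact (P i).hasFDerivAt

lemma hasFDerivAt_q (x : E2) :
    HasFDerivAt (q h) ((2 * x 0) • P 0 + (2 * x 1) • P 1) x := by
  have h0 := proj_hasFDerivAt 0 x
  have h1 := proj_hasFDerivAt 1 x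
  have heq : q h = fun z : E2 => z 0 * z 0 + z 1 * z 1 + h ^ 2 := by
    funext z; unfold q; ring
  rw [heq]
  have := ((h0.mul h0).add (h1.mul h1)).add_const (h ^ 2)
  refine this.congr_fderiv ?_
  ext v
  simp [P]
  ring

lemma hasFDerivAt_sf (hh : h ≠ 0) (x : E2) : HasFDerivAt (sf h) (Ds h x) x := by
  have := (hasFDerivAt_q (h := h) x).sqrt (q_pos hh x).ne'
  refine (this.congr_fderiv ?_).congr_of_eventuallyEq (Filter.Eventually.of_forall fun _ => rfl)
  symm
  ext v
  have hs := sf_pos hh x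
  have hs' : Real.sqrt (q h x) = sf h x := rfl
  simp only [Ds, ContinuousLinearMap.add_apply, ContinuousLinearMap.coe_smul',
    Pi.smul_apply, smul_eq_mul, hs']
  field_simp

lemma hasFDerivAt_ym (hh : h ≠ 0) (x : E2) : HasFDerivAt (ym Δ h) (Dy Δ h x) x := by
  have h0 := proj_hasFDerivAt 0 x
  have h1 := proj_hasFDerivAt 1 x
  have c0 : HasFDerivAt (fun z : E2 => Real.sqrt (1 - Δ ^ 2) * z 0)
      ((Real.sqrt (1 - Δ ^ 2)) • P 0) x := h0.const_mul _
  have c1 : HasFDerivAt (fun z : E2 => Real.sqrt (1 - Δ ^ 2) * z 1)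
      ((Real.sqrt (1 - Δ ^ 2)) • P 1) x := h1.const_mul _
  have c2 : HasFDerivAt (fun z : E2 => Δ * sf h z) (Δ • Ds h x) x :=
    (hasFDerivAt_sf hh x).const_mul _
  exact ((c0.smul_const (u3 0)).add (c1.smul_const (u3 1))).add (c2.smul_const (u3 2))

lemma fderiv_ym (hh : h ≠ 0) (x : E2) : fderiv ℝ (ym Δ h) x = Dy Δ h x :=
  (hasFDerivAt_ym Δ hh x).fderiv

lemma contDiff_ym (hh : h ≠ 0) : ContDiff ℝ 2 (ym Δ h) := by
  have h0 : ContDiff ℝ 2 (fun z : E2 => z 0) := (P 0).contDiff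
  have h1 : ContDiff ℝ 2 (fun z : E2 => z 1) := (P 1).contDiff
  have hq : ContDiff ℝ 2 (q h) := by
    unfold q; exact ((h0.pow 2).add (h1.pow 2)).add contDiff_const
  have hs : ContDiff ℝ 2 (sf h) := hq.sqrt (fun x => (q_pos hh x).ne')
  exact (((contDiff_const.mul h0).smul contDiff_const).add
    ((contDiff_const.mul h1).smul contDiff_const)).add
    ((contDiff_const.mul hs).smul contDiff_const)

-- PART2 (appended inside namespace Stmt7Aux, after part 1)
@[simp] lemma P_apply (i : Fin 2) (v : E2) : P i v = v i := rfl

lemma inner_u3 (k l : Fin 3) : (inner ℝ (u3 k) (u3 l) : ℝ) = if k = l then 1 else 0 := by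
  rw [u3, u3, EuclideanSpace.inner_single_left]
  simp [EuclideanSpace.single_apply, eq_comm]

lemma Dy_apply0 (x : E2) :
    Dy Δ h x (e2 0) = Real.sqrt (1 - Δ ^ 2) • u3 0 + (Δ * (x 0 / sf h x)) • u3 2 := by
  simp [Dy, Ds, e2, EuclideanSpace.single_apply]

lemma Dy_apply1 (x : E2) :
    Dy Δ h x (e2 1) = Real.sqrt (1 - Δ ^ 2) • u3 1 + (Δ * (x 1 / sf h x)) • u3 2 := by
  simp [Dy, Ds, e2, EuclideanSpace.single_apply]

lemma inner00 (hΔ1 : Δ ^ 2 ≤ 1) (hh : h ≠ 0) (x : E2) :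
    (inner ℝ (Dy Δ h x (e2 0)) (Dy Δ h x (e2 0)) : ℝ)
      = (1 - Δ ^ 2) + Δ ^ 2 * (x 0 * x 0) / q h x := by
  rw [Dy_apply0]
  simp only [inner_add_left, inner_add_right, real_inner_smul_left, real_inner_smul_right,
    inner_u3]
  simp [u3, EuclideanSpace.single_apply, Fin.sum_univ_three]
  rw [← sf_sq hh x, Real.mul_self_sqrt (by linarith)]
  field_simp

lemma inner11 (hΔ1 : Δ ^ 2 ≤ 1) (hh : h ≠ 0) (x : E2) :
    (inner ℝ (Dy Δ h x (e2 1)) (Dy Δ h x (e2 1)) : ℝ)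
      = (1 - Δ ^ 2) + Δ ^ 2 * (x 1 * x 1) / q h x := by
  rw [Dy_apply1]
  simp only [inner_add_left, inner_add_right, real_inner_smul_left, real_inner_smul_right,
    inner_u3]
  simp [u3, EuclideanSpace.single_apply, Fin.sum_univ_three]
  rw [← sf_sq hh x, Real.mul_self_sqrt (by linarith)]
  field_simp

lemma inner01 (hh : h ≠ 0) (x : E2) :
    (inner ℝ (Dy Δ h x (e2 0)) (Dy Δ h x (e2 1)) : ℝ) = Δ ^ 2 * (x 0 * x 1) / q h x := by
  rw [Dy_apply0, Dy_apply1]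
  simp only [inner_add_left, inner_add_right, real_inner_smul_left, real_inner_smul_right,
    inner_u3]
  simp [u3, EuclideanSpace.single_apply, Fin.sum_univ_three]
  rw [← sf_sq hh x]
  field_simp

lemma inner10 (hh : h ≠ 0) (x : E2) :
    (inner ℝ (Dy Δ h x (e2 1)) (Dy Δ h x (e2 0)) : ℝ) = Δ ^ 2 * (x 1 * x 0) / q h x := by
  rw [Dy_apply0, Dy_apply1]
  simp only [inner_add_left, inner_add_right, real_inner_smul_left, real_inner_smul_right,
    inner_u3]
  simp [u3, EuclideanSpace.single_apply, Fin.sum_univ_three]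
  rw [← sf_sq hh x]
  field_simp

lemma norm_sq_E2 (x : E2) : ‖x‖ ^ 2 = x 0 ^ 2 + x 1 ^ 2 := by
  rw [EuclideanSpace.norm_eq, Real.sq_sqrt (by positivity)]
  simp [Fin.sum_univ_two]

lemma memb_eq (hΔ1 : Δ ^ 2 ≤ 1) (hh : h ≠ 0) (x : E2) (hx : x ≠ 0) :
    memb Δ (ym Δ h) x = Δ ^ 4 * h ^ 4 / (q h x) ^ 2 := by
  have hq := q_pos hh x
  have hnx : (0:ℝ) < ‖x‖ := norm_pos_iff.2 hx
  have hn2 : ‖x‖ ^ 2 = x 0 ^ 2 + x 1 ^ 2 := norm_sq_E2 x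
  have hr2 : (0:ℝ) < x 0 ^ 2 + x 1 ^ 2 := by rw [← hn2]; positivity
  unfold memb
  rw [fderiv_ym Δ hh x]
  simp only [Fin.sum_univ_two]
  rw [inner00 Δ hΔ1 hh x, inner11 Δ hΔ1 hh x, inner01 Δ hh x, inner10 Δ hh x]
  simp only [gDelta, perpHat]
  norm_num
  have hq' : q h x = x 0 ^ 2 + x 1 ^ 2 + h ^ 2 := rfl
  rw [hq']
  have hnn : ‖x‖ * ‖x‖ = x 0 ^ 2 + x 1 ^ 2 := by rw [← hn2]; ring
  field_simp
  rw [show ‖x‖ ^ 4 = (‖x‖ ^ 2) ^ 2 by ring, hn2]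
  ring

-- PART3
def Dg' (Δ : ℝ) {h : ℝ} (i : Fin 2) (x : E2) : E2 →L[ℝ] ℝ :=
  Δ • (x i • ((-(sf h x ^ 2)⁻¹) • Ds h x) + (sf h x)⁻¹ • P i)

lemma hasFDerivAt_sndDeriv0 (hh : h ≠ 0) (x : E2) :
    HasFDerivAt (fun z : E2 => fderiv ℝ (ym Δ h) z (e2 0))
      ((Dg' Δ (h := h) 0 x).smulRight (u3 2)) x := by
  have hs := sf_pos hh x
  have heq : (fun z : E2 => fderiv ℝ (ym Δ h) z (e2 0))
      = fun z : E2 => (Δ * (z 0 * (sf h z)⁻¹)) • u3 2 + Real.sqrt (1 - Δ ^ 2) • u3 0 := by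
    funext z
    rw [fderiv_ym Δ hh z, Dy_apply0, div_eq_mul_inv, add_comm]
  rw [heq]
  have hinv : HasFDerivAt (fun z : E2 => (sf h z)⁻¹) ((-(sf h x ^ 2)⁻¹) • Ds h x) x :=
    (hasDerivAt_inv hs.ne').comp_hasFDerivAt x (hasFDerivAt_sf hh x)
  have hmul : HasFDerivAt (fun z : E2 => z 0 * (sf h z)⁻¹)
      (x 0 • ((-(sf h x ^ 2)⁻¹) • Ds h x) + (sf h x)⁻¹ • P 0) x :=
    (proj_hasFDerivAt 0 x).mul hinv
  exact ((hmul.const_mul Δ).smul_const (u3 2)).add_const _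

lemma hasFDerivAt_sndDeriv1 (hh : h ≠ 0) (x : E2) :
    HasFDerivAt (fun z : E2 => fderiv ℝ (ym Δ h) z (e2 1))
      ((Dg' Δ (h := h) 1 x).smulRight (u3 2)) x := by
  have hs := sf_pos hh x
  have heq : (fun z : E2 => fderiv ℝ (ym Δ h) z (e2 1))
      = fun z : E2 => (Δ * (z 1 * (sf h z)⁻¹)) • u3 2 + Real.sqrt (1 - Δ ^ 2) • u3 1 := by
    funext z
    rw [fderiv_ym Δ hh z, Dy_apply1, div_eq_mul_inv, add_comm]
  rw [heq]
  have hinv : HasFDerivAt (fun z : E2 => (sf h z)⁻¹) ((-(sf h x ^ 2)⁻¹) • Ds h x) x :=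
    (hasDerivAt_inv hs.ne').comp_hasFDerivAt x (hasFDerivAt_sf hh x)
  have hmul : HasFDerivAt (fun z : E2 => z 1 * (sf h z)⁻¹)
      (x 1 • ((-(sf h x ^ 2)⁻¹) • Ds h x) + (sf h x)⁻¹ • P 1) x :=
    (proj_hasFDerivAt 1 x).mul hinv
  exact ((hmul.const_mul Δ).smul_const (u3 2)).add_const _

lemma Dg'_apply (i j : Fin 2) (x : E2) :
    Dg' Δ (h := h) i x (e2 j) =
      Δ * ((if i = j then 1 else 0) / sf h x - x i * x j / sf h x ^ 3) := by
  fin_cases i <;> fin_cases j <;>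
  · simp [Dg', Ds, e2, EuclideanSpace.single_apply]
    first | ring1 | exact Or.inl (by ring)

lemma entry_sq_diag (hh : h ≠ 0) (x : E2) (B : ℝ) :
    (Δ * ((sf h x)⁻¹ - B / sf h x ^ 3)) ^ 2 = Δ ^ 2 * (q h x - B) ^ 2 / (q h x) ^ 3 := by
  have hs := sf_pos hh x
  rw [← sf_sq hh x]
  field_simp

lemma entry_sq_off (hh : h ≠ 0) (x : E2) (B : ℝ) :
    (Δ * (B / sf h x ^ 3)) ^ 2 = Δ ^ 2 * B ^ 2 / (q h x) ^ 3 := by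
  have hs := sf_pos hh x
  rw [← sf_sq hh x]
  field_simp

lemma bend_eq (hh : h ≠ 0) (x : E2) :
    bend (ym Δ h) x = Δ ^ 2 * ((q h x) ^ 2 + h ^ 4) / (q h x) ^ 3 := by
  have hq := q_pos hh x
  unfold bend
  simp only [Fin.sum_univ_two]
  rw [(hasFDerivAt_sndDeriv0 Δ hh x).fderiv, (hasFDerivAt_sndDeriv1 Δ hh x).fderiv]
  simp only [ContinuousLinearMap.smulRight_apply, norm_smul, u3, EuclideanSpace.norm_single,
    norm_one, mul_one, Real.norm_eq_abs, sq_abs]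
  rw [Dg'_apply, Dg'_apply, Dg'_apply, Dg'_apply]
  norm_num
  rw [entry_sq_diag Δ hh x (x 0 * x 0), entry_sq_off Δ hh x (x 0 * x 1),
    entry_sq_off Δ hh x (x 1 * x 0), entry_sq_diag Δ hh x (x 1 * x 1)]
  have hq' : q h x = x 0 ^ 2 + x 1 ^ 2 + h ^ 2 := rfl
  rw [hq']
  field_simp
  ring

-- PART4
def Fball (Δ h r : ℝ) : ℝ :=
  Δ ^ 4 * h ^ 4 / (r ^ 2 + h ^ 2) ^ 2
    + h ^ 2 * (Δ ^ 2 * ((r ^ 2 + h ^ 2) ^ 2 + h ^ 4) / (r ^ 2 + h ^ 2) ^ 3)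

def Ffull (Δ h r : ℝ) : ℝ := if r < 1 then Fball Δ h r else 0

def Aprim (Δ h y : ℝ) : ℝ :=
  -(Δ ^ 4 * h ^ 4) / (2 * (y ^ 2 + h ^ 2))
    + h ^ 2 * Δ ^ 2 * ((1 / 2) * Real.log (y ^ 2 + h ^ 2) - h ^ 4 / (4 * (y ^ 2 + h ^ 2) ^ 2))

lemma pointsum (hΔ1 : Δ ^ 2 ≤ 1) (hh : h ≠ 0) (x : E2) (hx : x ≠ 0) :
    memb Δ (ym Δ h) x + h ^ 2 * bend (ym Δ h) x = Fball Δ h ‖x‖ := by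
  rw [memb_eq Δ hΔ1 hh x hx, bend_eq Δ hh x]
  have hq' : q h x = ‖x‖ ^ 2 + h ^ 2 := by rw [norm_sq_E2]; rfl
  rw [hq', Fball]

lemma energy_eq_aux (hΔ1 : Δ ^ 2 ≤ 1) (hh : h ≠ 0) :
    Ienergy h Δ (ym Δ h) = ∫ x in ball (0 : E2) 1, Fball Δ h ‖x‖ := by
  unfold Ienergy
  refine setIntegral_congr_ae measurableSet_ball ?_
  have h0 : (volume : Measure E2) {0} = 0 := measure_singleton 0
  refine (MeasureTheory.ae_iff).2 (measure_mono_null ?_ h0)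
  intro x hx
  simp only [Set.mem_setOf_eq] at hx
  by_contra hne
  simp only [Set.mem_singleton_iff] at hne
  exact hx fun _ => pointsum Δ hΔ1 hh x hne

lemma volume_ball_E2 : (volume (ball (0 : E2) 1)).toReal = Real.pi := by
  rw [EuclideanSpace.volume_ball]
  simp only [Fintype.card_fin]
  rw [ENNReal.toReal_mul]
  norm_num [Real.Gamma_two, Real.sq_sqrt Real.pi_nonneg, Real.pi_nonneg]

lemma integral_ball_eq (Δ h : ℝ) :
    (∫ x in ball (0 : E2) 1, Fball Δ h ‖x‖)
      = 2 * Real.pi * ∫ y in (0:ℝ)..1, y * Fball Δ h y := by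
  rw [← integral_indicator measurableSet_ball]
  have hind : ∀ x : E2, (ball (0:E2) 1).indicator (fun x : E2 => Fball Δ h ‖x‖) x
      = Ffull Δ h ‖x‖ := by
    intro x
    by_cases hx : ‖x‖ < 1
    · rw [Set.indicator_of_mem (mem_ball_zero_iff.2 hx), Ffull, if_pos hx]
    · rw [Set.indicator_of_notMem (fun hm => hx (mem_ball_zero_iff.1 hm)), Ffull, if_neg hx]
  simp_rw [hind]
  rw [integral_fun_norm_addHaar volume (Ffull Δ h)]
  rw [finrank_euclideanSpace, Fintype.card_fin]
  have hsm : ∀ y : ℝ, y ^ (2 - 1) • Ffull Δ h y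
      = (Set.Iio (1:ℝ)).indicator (fun y => y * Fball Δ h y) y := by
    intro y
    by_cases hy : y < 1
    · simp [Ffull, if_pos hy, Set.indicator_of_mem (Set.mem_Iio.2 hy)]
    · simp [Ffull, if_neg hy, Set.indicator_of_notMem (fun hm => hy (Set.mem_Iio.1 hm))]
  simp_rw [hsm]
  rw [setIntegral_indicator measurableSet_Iio, Set.Ioi_inter_Iio,
    ← integral_Ioc_eq_integral_Ioo, ← intervalIntegral.integral_of_le zero_le_one]
  rw [measureReal_def, volume_ball_E2]
  rw [nsmul_eq_mul, smul_eq_mul]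
  push_cast
  ring

lemma hasDerivAt_Aprim (hh : h ≠ 0) (y : ℝ) :
    HasDerivAt (Aprim Δ h) (y * Fball Δ h y) y := by
  have ht : (0:ℝ) < y ^ 2 + h ^ 2 := by positivity
  have hq : HasDerivAt (fun y : ℝ => y ^ 2 + h ^ 2) (2 * y) y := by
    simpa using ((hasDerivAt_pow 2 y).add_const (h ^ 2))
  have h1 : HasDerivAt (fun y : ℝ => -(Δ ^ 4 * h ^ 4) / (2 * (y ^ 2 + h ^ 2)))
      (-(-(Δ ^ 4 * h ^ 4) * (2 * (2 * y))) / (2 * (y ^ 2 + h ^ 2)) ^ 2) y := by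
    exact ((hasDerivAt_const y (-(Δ ^ 4 * h ^ 4))).div (hq.const_mul 2)
      (by positivity)).congr_deriv (by ring)
  have h2 : HasDerivAt (fun y : ℝ => Real.log (y ^ 2 + h ^ 2)) (2 * y / (y ^ 2 + h ^ 2)) y :=
    hq.log ht.ne'
  have h3 : HasDerivAt (fun y : ℝ => h ^ 4 / (4 * (y ^ 2 + h ^ 2) ^ 2))
      (-(h ^ 4 * (4 * (2 * (y ^ 2 + h ^ 2) * (2 * y)))) / (4 * (y ^ 2 + h ^ 2) ^ 2) ^ 2) y := by
    have hsq : HasDerivAt (fun y : ℝ => (y ^ 2 + h ^ 2) ^ 2) (2 * (y ^ 2 + h ^ 2) * (2 * y)) y := by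
      exact (hq.pow 2).congr_deriv (by push_cast; ring)
    exact ((hasDerivAt_const y (h ^ 4)).div (hsq.const_mul 4) (by positivity)).congr_deriv (by ring)
  have := h1.add (((h2.const_mul (1/2 : ℝ)).sub h3).const_mul (h ^ 2 * Δ ^ 2))
  refine this.congr_deriv ?_
  rw [Fball]
  field_simp
  ring

lemma interval_value (hh : h ≠ 0) :
    (∫ y in (0:ℝ)..1, y * Fball Δ h y) = Aprim Δ h 1 - Aprim Δ h 0 := by
  refine intervalIntegral.integral_eq_sub_of_hasDerivAt
    (fun y _ => hasDerivAt_Aprim Δ hh y) ?_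
  apply Continuous.intervalIntegrable
  have ht : ∀ y : ℝ, (y ^ 2 + h ^ 2) ≠ 0 := fun y => by positivity
  have hc : Continuous fun y : ℝ => y ^ 2 + h ^ 2 := by continuity
  apply continuous_id.mul
  exact ((continuous_const.div (hc.pow 2) (fun y => pow_ne_zero _ (ht y))).add
    (continuous_const.mul ((continuous_const.mul ((hc.pow 2).add continuous_const)).div
      (hc.pow 3) (fun y => pow_ne_zero _ (ht y)))))

-- PART5
lemma Aprim_zero (hh : h ≠ 0) :
    Aprim Δ h 0 = -(Δ ^ 4 * h ^ 2) / 2 + h ^ 2 * Δ ^ 2 * (Real.log h - 1 / 4) := by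
  unfold Aprim
  have h2 : (0:ℝ) ^ 2 + h ^ 2 = h ^ 2 := by ring
  rw [h2]
  have hlog : Real.log (h ^ 2) = 2 * Real.log h := by
    rw [Real.log_pow]; push_cast; ring
  rw [hlog]
  have hh2 : (h:ℝ) ^ 2 ≠ 0 := pow_ne_zero 2 hh
  field_simp

lemma value_bound (hΔ0 : 0 < Δ) (hΔ1 : Δ < 1) (h0 : 0 < h) (h1 : h < 1) :
    Aprim Δ h 1 - Aprim Δ h 0 ≤ Δ ^ 2 * h ^ 2 * (|Real.log h| + 2) := by
  have hh : h ≠ 0 := h0.ne'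
  have habs : |Real.log h| = -Real.log h := abs_of_neg (Real.log_neg h0 h1)
  have hl1 : Real.log (1 + h ^ 2) ≤ 1 := by
    have := Real.log_le_sub_one_of_pos (show (0:ℝ) < 1 + h ^ 2 by positivity)
    nlinarith
  have e0 := Aprim_zero Δ hh
  have e1 : Aprim Δ h 1 ≤ h ^ 2 * Δ ^ 2 * (1 / 2) := by
    unfold Aprim
    have h2 : (1:ℝ) ^ 2 + h ^ 2 = 1 + h ^ 2 := by ring
    rw [h2]
    have t1 : -(Δ ^ 4 * h ^ 4) / (2 * (1 + h ^ 2)) ≤ 0 :=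
      div_nonpos_of_nonpos_of_nonneg (neg_nonpos.2 (by positivity)) (by positivity)
    have t2 : (0:ℝ) ≤ h ^ 4 / (4 * (1 + h ^ 2) ^ 2) := by positivity
    nlinarith [sq_nonneg h, sq_nonneg Δ, mul_pos (pow_pos h0 2) (pow_pos hΔ0 2)]
  rw [e0]
  have hΔ2 : Δ ^ 2 ≤ 1 := by nlinarith
  have hd4 : Δ ^ 4 ≤ Δ ^ 2 := by
    nlinarith [mul_nonneg (sq_nonneg Δ) (show (0:ℝ) ≤ 1 - Δ ^ 2 by linarith)]
  have hpos : (0:ℝ) < h ^ 2 := by positivity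
  nlinarith [mul_pos hpos (pow_pos hΔ0 2), habs, Real.log_neg h0 h1]

end Stmt7Aux

/-- The singular cone `y^Δ(x) = √(1−Δ²) x + Δ|x| e₃`. -/
noncomputable def yCone (Δ : ℝ) (x : E2) : E3 :=
  (WithLp.equiv 2 (Fin 3 → ℝ)).symm
    ![Real.sqrt (1 - Δ ^ 2) * x 0, Real.sqrt (1 - Δ ^ 2) * x 1, Δ * ‖x‖]

/-- There is `C = C(Δ)` such that for all small enough `h`, the infimum of
`I_{h,Δ}` over `W^{2,2}(B₁;ℝ³)` is at most `2πΔ²h²(|log h| + C)`; we exhibit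
a `C²` competitor (hence in `W^{2,2}(B₁;ℝ³)`) with this energy bound. -/
theorem stmt7 (Δ : ℝ) (hΔ : Δ ∈ Set.Ioo (0 : ℝ) 1) :
    ∃ C : ℝ, 0 < C ∧ ∃ h₀ : ℝ, 0 < h₀ ∧ ∀ h : ℝ, 0 < h → h < h₀ →
      ∃ y : E2 → E3, ContDiff ℝ 2 y ∧
        Ienergy h Δ y ≤ 2 * Real.pi * Δ ^ 2 * h ^ 2 * (|Real.log h| + C) := by
  obtain ⟨hΔ0, hΔ1⟩ := hΔ
  refine ⟨2, by norm_num, 1, by norm_num, fun h h0 h1 => ?_⟩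
  have hh : h ≠ 0 := h0.ne'
  have hΔ2 : Δ ^ 2 ≤ 1 := by nlinarith
  refine ⟨Stmt7Aux.ym Δ h, Stmt7Aux.contDiff_ym Δ hh, ?_⟩
  rw [Stmt7Aux.energy_eq_aux Δ hΔ2 hh, Stmt7Aux.integral_ball_eq Δ h,
    Stmt7Aux.interval_value Δ hh]
  have hb := Stmt7Aux.value_bound Δ hΔ0 hΔ1 h0 h1
  have hπ : (0:ℝ) ≤ 2 * Real.pi := by positivity
  calc 2 * Real.pi * (Stmt7Aux.Aprim Δ h 1 - Stmt7Aux.Aprim Δ h 0)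
      ≤ 2 * Real.pi * (Δ ^ 2 * h ^ 2 * (|Real.log h| + 2)) :=
        mul_le_mul_of_nonneg_left hb hπ
    _ = 2 * Real.pi * Δ ^ 2 * h ^ 2 * (|Real.log h| + 2) := by ring
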